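/- arXiv:2208.10385 — 4 statements merged into one kernel-verified Lean document; each statement's English description precedes it below -/
import Mathlib

section
/- Let G be a compact Hausdorff topological group equipped with its normalized Haar probability measure μ, and let (V, ρ) be an irreducible continuous unitary representation of G. Then for all u, v, w, x ∈ V one has ∫_G conj(⟨u, ρ(g)v⟩) · ⟨w, ρ(g)x⟩ dμ(g) = ⟨w, u⟩ · ⟨v, x⟩ / dim V. In particular, for an orthonormal basis (v_i) of V the matrix coefficients t_{ij}(g) = ⟨v_i, ρ(g)v_j⟩ satisfy ⟨t_{ij}, t_{kl}⟩_{L²(G,μ)} = δ_{ik} δ_{jl} / dim V. -/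
open MeasureTheory

/-- **Schur orthogonality (same irreducible representation).**
For a compact Hausdorff topological group `G` with normalized Haar probability
measure `μ` and an irreducible continuous unitary representation `ρ` of `G` on a
nonzero finite-dimensional complex inner ℂ product space `V`, the matrix
coefficients satisfy
`∫ conj ⟨u, ρ(g) v⟩ · ⟨w, ρ(g) x⟩ dμ(g) = ⟨w, u⟩ ⟨v, x⟩ / dim V`. -/
theorem schur_orthogonality_same {G : Type*} [Group G] [TopologicalSpace G]
    [IsTopologicalGroup G] [CompactSpace G] [T2Space G]
    [MeasurableSpace G] [BorelSpace G]
    (μ : Measure G) [μ.IsHaarMeasure] [IsProbabilityMeasure μ]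
    {V : Type*} [NormedAddCommGroup V] [InnerProductSpace ℂ V]
    [FiniteDimensional ℂ V] [Nontrivial V]
    (ρ : G →* (V →ₗ[ℂ] V))
    (hρ_unit : ∀ (g : G) (u v : V), (inner ℂ (ρ g u) (ρ g v) : ℂ) = inner ℂ u v)
    (hρ_cont : ∀ v : V, Continuous fun g : G => ρ g v)
    (hρ_irr : ∀ U : Submodule ℂ V,
      (∀ (g : G) (v : V), v ∈ U → ρ g v ∈ U) → U = ⊥ ∨ U = ⊤)
    (u v w x : V) :
    ∫ g, (starRingEnd ℂ) ((inner ℂ u (ρ g v) : ℂ)) * (inner ℂ w (ρ g x) : ℂ) ∂μ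
      = (inner ℂ w u : ℂ) * (inner ℂ v x : ℂ) / (Module.finrank ℂ V : ℂ) := by
  classical
  set n := Module.finrank ℂ V with hn_def
  have hn : 0 < n := Module.finrank_pos
  have hn0 : (n : ℂ) ≠ 0 := Nat.cast_ne_zero.mpr hn.ne'
  set b : OrthonormalBasis (Fin n) ℂ V := stdOrthonormalBasis ℂ V with hb_def
  -- continuity / integrability of the vector integrand
  have hF_cont : ∀ u' : V, Continuous fun g => (inner ℂ (ρ g v) u' : ℂ) • ρ g x := by
    intro u'
    exact ((hρ_cont v).inner continuous_const).smul (hρ_cont x)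
  have hF_int : ∀ u' : V, Integrable (fun g => (inner ℂ (ρ g v) u' : ℂ) • ρ g x) μ := by
    intro u'
    exact (hF_cont u').integrable_of_hasCompactSupport
      (HasCompactSupport.of_compactSpace _)
  -- the averaged operator
  let T : V →ₗ[ℂ] V :=
    { toFun := fun u' => ∫ g, (inner ℂ (ρ g v) u' : ℂ) • ρ g x ∂μ
      map_add' := by
        intro a c
        simp only [inner_add_right, add_smul]
        exact integral_add (hF_int a) (hF_int c)
      map_smul' := by
        intro m a
        simp only [inner_smul_right, RingHom.id_apply]
        rw [← integral_smul]
        congr 1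
        funext g
        rw [smul_smul] }
  have hT_apply : ∀ u' : V, T u' = ∫ g, (inner ℂ (ρ g v) u' : ℂ) • ρ g x ∂μ :=
    fun _ => rfl
  -- T commutes with the representation
  have hT_comm : ∀ (h : G) (u' : V), ρ h (T u') = T (ρ h u') := by
    intro h u'
    have h1 : ρ h (T u') = ∫ g, (inner ℂ (ρ g v) u' : ℂ) • ρ (h * g) x ∂μ := by
      rw [hT_apply]
      calc (ρ h) (∫ g, (inner ℂ (ρ g v) u' : ℂ) • ρ g x ∂μ)
          = (LinearMap.toContinuousLinearMap (ρ h))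
              (∫ g, (inner ℂ (ρ g v) u' : ℂ) • ρ g x ∂μ) := rfl
        _ = ∫ g, (LinearMap.toContinuousLinearMap (ρ h))
              ((inner ℂ (ρ g v) u' : ℂ) • ρ g x) ∂μ :=
            ((LinearMap.toContinuousLinearMap (ρ h)).integral_comp_comm
              (hF_int u')).symm
        _ = ∫ g, (inner ℂ (ρ g v) u' : ℂ) • ρ (h * g) x ∂μ := by
            congr 1
            funext g
            simp [map_mul ρ, Module.End.mul_apply, _root_.map_smul]
    have h2 : T (ρ h u') = ∫ g, (inner ℂ (ρ (h⁻¹ * g) v) u' : ℂ) • ρ g x ∂μ := by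
      rw [hT_apply]
      congr 1
      funext g
      congr 1
      have := hρ_unit h (ρ (h⁻¹ * g) v) u'
      rw [← this]
      congr 1
      rw [← Module.End.mul_apply, ← map_mul]
      rw [mul_inv_cancel_left]
    rw [h1, h2]
    rw [← MeasureTheory.integral_mul_left_eq_self
      (fun g => (inner ℂ (ρ (h⁻¹ * g) v) u' : ℂ) • ρ g x) h]
    congr 1
    funext g
    rw [inv_mul_cancel_left]
  -- Schur's lemma: T is scalar
  obtain ⟨c, hc⟩ : ∃ c : ℂ, ∀ y : V, T y = c • y := by
    obtain ⟨c, hc⟩ := Module.End.exists_eigenvalue (T : Module.End ℂ V)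
    refine ⟨c, ?_⟩
    have hUinv : ∀ (g : G) (y : V),
        y ∈ Module.End.eigenspace (T : Module.End ℂ V) c →
        ρ g y ∈ Module.End.eigenspace (T : Module.End ℂ V) c := by
      intro g y hy
      rw [Module.End.mem_eigenspace_iff] at hy ⊢
      calc T (ρ g y) = ρ g (T y) := (hT_comm g y).symm
        _ = ρ g (c • y) := by rw [hy]
        _ = c • ρ g y := map_smul _ _ _
    rcases hρ_irr _ hUinv with h0 | htop
    · exact absurd h0 hc
    · intro y
      have hy : y ∈ Module.End.eigenspace (T : Module.End ℂ V) c := htop ▸ trivial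
      exact Module.End.mem_eigenspace_iff.mp hy
  -- compute c via the trace
  have htrace : c * n = inner ℂ v x := by
    have h1 : ∀ i : Fin n, (inner ℂ (b i) (T (b i)) : ℂ)
        = ∫ g, (inner ℂ (b i) ((inner ℂ (ρ g v) (b i) : ℂ) • ρ g x) : ℂ) ∂μ := by
      intro i
      rw [hT_apply]
      exact (integral_inner (hF_int (b i)) (b i)).symm
    have h2 : ∑ i : Fin n, (inner ℂ (b i) (T (b i)) : ℂ) = c * n := by
      simp only [hc, inner_smul_right]
      have : ∀ i : Fin n, (inner ℂ (b i) (b i) : ℂ) = 1 := fun i => by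
        have h := orthonormal_iff_ite.mp b.orthonormal i i
        simpa using h
      simp [this, Finset.sum_const, mul_comm]
    have h3 : ∑ i : Fin n, (inner ℂ (b i) (T (b i)) : ℂ) = inner ℂ v x := by
      simp only [h1]
      rw [← integral_finset_sum]
      · have key : ∀ g : G,
            (∑ i : Fin n, (inner ℂ (b i) ((inner ℂ (ρ g v) (b i) : ℂ) • ρ g x) : ℂ))
            = inner ℂ v x := by
          intro g
          have : ∀ i : Fin n, (inner ℂ (b i) ((inner ℂ (ρ g v) (b i) : ℂ) • ρ g x) : ℂ)
              = (inner ℂ (ρ g v) (b i) : ℂ) * inner ℂ (b i) (ρ g x) := fun i =>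
            inner_smul_right _ _ _
          simp only [this]
          rw [b.sum_inner_mul_inner (ρ g v) (ρ g x), hρ_unit]
        rw [MeasureTheory.integral_congr_ae (Filter.Eventually.of_forall key)]
        simp
      · intro i _
        have : Continuous fun g =>
            (inner ℂ (b i) ((inner ℂ (ρ g v) (b i) : ℂ) • ρ g x) : ℂ) :=
          continuous_const.inner (hF_cont (b i))
        exact this.integrable_of_hasCompactSupport (HasCompactSupport.of_compactSpace _)
    rw [← h2, h3]
  -- conclude
  have hLHS : (∫ g, (starRingEnd ℂ) ((inner ℂ u (ρ g v) : ℂ)) * (inner ℂ w (ρ g x) : ℂ) ∂μ)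
      = inner ℂ w (T u) := by
    rw [hT_apply, ← integral_inner (hF_int u) w]
    congr 1
    funext g
    rw [inner_smul_right, inner_conj_symm]
  rw [hLHS, hc, inner_smul_right]
  have hcval : c = (inner ℂ v x : ℂ) / n := by
    rw [eq_div_iff hn0]
    exact htrace
  rw [hcval]
  ring
end

section
/- Let G be a compact Hausdorff topological group equipped with its normalized Haar probability measure μ, and let (V, ρ_V) and (W, ρ_W) be irreducible continuous unitary representations of G that are not isomorphic. Then for all u, v ∈ V and w, x ∈ W one has ∫_G conj(⟨u, ρ_V(g)v⟩) · ⟨w, ρ_W(g)x⟩ dμ(g) = 0. -/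
open MeasureTheory

/-- **Schur orthogonality (distinct irreducible representations).**
Matrix coefficients of non-isomorphic irreducible continuous unitary
representations of a compact Hausdorff group are orthogonal in `L²(G, μ)`. -/
theorem schur_orthogonality_distinct {G : Type*} [Group G] [TopologicalSpace G]
    [IsTopologicalGroup G] [CompactSpace G] [T2Space G]
    [MeasurableSpace G] [BorelSpace G]
    (μ : Measure G) [μ.IsHaarMeasure] [IsProbabilityMeasure μ]
    {V : Type*} [NormedAddCommGroup V] [InnerProductSpace ℂ V]
    [FiniteDimensional ℂ V] [Nontrivial V]
    {W : Type*} [NormedAddCommGroup W] [InnerProductSpace ℂ W]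
    [FiniteDimensional ℂ W] [Nontrivial W]
    (ρV : G →* (V →ₗ[ℂ] V)) (ρW : G →* (W →ₗ[ℂ] W))
    (hV_unit : ∀ (g : G) (u v : V), (inner ℂ (ρV g u) (ρV g v) : ℂ) = inner ℂ u v)
    (hV_cont : ∀ v : V, Continuous fun g : G => ρV g v)
    (hV_irr : ∀ U : Submodule ℂ V,
      (∀ (g : G) (v : V), v ∈ U → ρV g v ∈ U) → U = ⊥ ∨ U = ⊤)
    (hW_unit : ∀ (g : G) (u v : W), (inner ℂ (ρW g u) (ρW g v) : ℂ) = inner ℂ u v)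
    (hW_cont : ∀ w : W, Continuous fun g : G => ρW g w)
    (hW_irr : ∀ U : Submodule ℂ W,
      (∀ (g : G) (w : W), w ∈ U → ρW g w ∈ U) → U = ⊥ ∨ U = ⊤)
    (hniso : ¬ ∃ T : V ≃ₗ[ℂ] W, ∀ (g : G) (v : V), T (ρV g v) = ρW g (T v))
    (u v : V) (w x : W) :
    ∫ g, (starRingEnd ℂ) ((inner ℂ u (ρV g v) : ℂ)) * (inner ℂ w (ρW g x) : ℂ) ∂μ
      = 0 := by
  classical
  -- the averaged operator
  set F : V → G → W := fun z g => (inner ℂ v (ρV g⁻¹ z) : ℂ) • ρW g x with hF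
  have contF : ∀ z : V, Continuous (F z) := by
    intro z
    exact (continuous_const.inner ((hV_cont z).comp continuous_inv)).smul (hW_cont x)
  have integF : ∀ z : V, Integrable (F z) μ := fun z =>
    (contF z).integrable_of_hasCompactSupport (HasCompactSupport.of_compactSpace _)
  set T : V → W := fun z => ∫ g, F z g ∂μ with hTdef
  -- T is linear
  have Tadd : ∀ z₁ z₂ : V, T (z₁ + z₂) = T z₁ + T z₂ := by
    intro z₁ z₂
    have : F (z₁ + z₂) = fun g => F z₁ g + F z₂ g := by
      funext g
      simp only [hF, map_add, inner_add_right, add_smul]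
    rw [hTdef]
    simp only [this]
    exact integral_add (integF z₁) (integF z₂)
  have Tsmul : ∀ (c : ℂ) (z : V), T (c • z) = c • T z := by
    intro c z
    have : F (c • z) = fun g => c • F z g := by
      funext g
      simp only [hF, LinearMap.map_smul, inner_smul_right, smul_smul]
    rw [hTdef]
    simp only [this]
    exact integral_smul c _
  set TL : V →ₗ[ℂ] W := { toFun := T, map_add' := Tadd, map_smul' := Tsmul } with hTL
  -- intertwining property
  have hinter : ∀ (h : G) (z : V), TL (ρV h z) = ρW h (TL z) := by
    intro h z
    have key : ∀ g : G, F (ρV h z) (h * g) = ρW h (F z g) := by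
      intro g
      simp only [hF, LinearMap.map_smul]
      congr 1
      · congr 1
        have : ρV (h * g)⁻¹ (ρV h z) = ρV g⁻¹ z := by
          rw [← Module.End.mul_apply, ← map_mul]
          congr 1
          group
        rw [this]
      · rw [← Module.End.mul_apply, ← map_mul]
    have h1 : TL (ρV h z) = ∫ g, F (ρV h z) (h * g) ∂μ := by
      exact (integral_mul_left_eq_self (F (ρV h z)) h).symm
    rw [h1]
    simp only [key]
    have : ∫ g, ρW h (F z g) ∂μ = ρW h (∫ g, F z g ∂μ) := by
      have := (LinearMap.toContinuousLinearMap (ρW h)).integral_comp_comm (integF z)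
      simpa using this
    exact this
  -- Schur's lemma: TL = 0
  have hTL0 : TL = 0 := by
    by_contra hne
    -- kernel is invariant
    have hker : ∀ (g : G) (z : V), z ∈ LinearMap.ker TL → ρV g z ∈ LinearMap.ker TL := by
      intro g z hz
      rw [LinearMap.mem_ker] at hz ⊢
      rw [hinter g z, hz, map_zero]
    have hrange : ∀ (g : G) (y : W), y ∈ LinearMap.range TL → ρW g y ∈ LinearMap.range TL := by
      rintro g y ⟨z, rfl⟩
      exact ⟨ρV g z, hinter g z⟩
    rcases hV_irr (LinearMap.ker TL) hker with hk | hk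
    · rcases hW_irr (LinearMap.range TL) hrange with hr | hr
      · exact hne (LinearMap.range_eq_bot.mp hr)
      · have hbij : Function.Bijective TL :=
          ⟨LinearMap.ker_eq_bot.mp hk, LinearMap.range_eq_top.mp hr⟩
        exact hniso ⟨LinearEquiv.ofBijective TL hbij, fun g z => hinter g z⟩
    · exact hne (LinearMap.ker_eq_top.mp hk)
  -- conclude
  have h0 : (inner ℂ w (TL u) : ℂ) = 0 := by rw [hTL0]; simp
  have h1 : (inner ℂ w (TL u) : ℂ) = ∫ g, (inner ℂ w (F u g) : ℂ) ∂μ := by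
    have := integral_inner (𝕜 := ℂ) (integF u) w
    exact this.symm
  have h2 : ∀ g : G, (inner ℂ w (F u g) : ℂ)
      = (starRingEnd ℂ) ((inner ℂ u (ρV g v) : ℂ)) * (inner ℂ w (ρW g x) : ℂ) := by
    intro g
    simp only [hF, inner_smul_right]
    congr 1
    have e1 : (inner ℂ v (ρV g⁻¹ u) : ℂ) = inner ℂ (ρV g v) (ρV g (ρV g⁻¹ u)) := (hV_unit g _ _).symm
    have e2 : ρV g (ρV g⁻¹ u) = u := by
      rw [← Module.End.mul_apply, ← map_mul, mul_inv_cancel, map_one, Module.End.one_apply]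
    rw [e1, e2, ← inner_conj_symm]
  rw [← funext h2]  -- may not apply directly
  calc ∫ g, (inner ℂ w (F u g) : ℂ) ∂μ = inner ℂ w (TL u) := h1.symm
    _ = 0 := h0
end

section
/- Let G be a compact Hausdorff topological group equipped with its normalized Haar probability measure μ, and let (V, ρ) be an irreducible continuous unitary representation of G. Then for all u, v, w, x ∈ V and all g ∈ G one has ∫_G ⟨u, ρ(g h)v⟩ · ⟨w, ρ(h⁻¹)x⟩ dμ(h) = ⟨w, v⟩ · ⟨u, ρ(g)x⟩ / dim V. In particular, for an orthonormal basis (v_i) of V the matrix coefficients t_{ij}(g) = ⟨v_i, ρ(g)v_j⟩ satisfy t_{ij} ∗ t_{kl} = δ_{jk} · t_{il} / dim V. -/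
open MeasureTheory

/-- **Convolution of matrix coefficients of a single irreducible representation.**
For an irreducible continuous unitary representation `ρ` of a compact Hausdorff
group `G` on `V`, and the normalized Haar probability measure `μ`,
`∫ ⟨u, ρ(g h) v⟩ · ⟨w, ρ(h⁻¹) x⟩ dμ(h) = ⟨w, v⟩ · ⟨u, ρ(g) x⟩ / dim V`
for all `u, v, w, x ∈ V` and `g ∈ G`. -/
theorem matrix_coeff_convolution_same {G : Type*} [Group G] [TopologicalSpace G]
    [IsTopologicalGroup G] [CompactSpace G] [T2Space G]
    [MeasurableSpace G] [BorelSpace G]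
    (μ : Measure G) [μ.IsHaarMeasure] [IsProbabilityMeasure μ]
    {V : Type*} [NormedAddCommGroup V] [InnerProductSpace ℂ V]
    [FiniteDimensional ℂ V] [Nontrivial V]
    (ρ : G →* (V →ₗ[ℂ] V))
    (hρ_unit : ∀ (g : G) (u v : V), (inner ℂ (ρ g u) (ρ g v) : ℂ) = inner ℂ u v)
    (hρ_cont : ∀ v : V, Continuous fun g : G => ρ g v)
    (hρ_irr : ∀ U : Submodule ℂ V,
      (∀ (g : G) (v : V), v ∈ U → ρ g v ∈ U) → U = ⊥ ∨ U = ⊤)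
    (u v w x : V) (g : G) :
    ∫ h, (inner ℂ u (ρ (g * h) v) : ℂ) * (inner ℂ w (ρ h⁻¹ x) : ℂ) ∂μ
      = (inner ℂ w v : ℂ) * (inner ℂ u (ρ g x) : ℂ) / (Module.finrank ℂ V : ℂ) := by
  classical
  -- `ρ g⁻¹` is the adjoint of `ρ g`
  have hinv : ∀ (k : G) (a : V), ρ k⁻¹ (ρ k a) = a := by
    intro k a
    have : (ρ k⁻¹ * ρ k) a = a := by rw [← map_mul, inv_mul_cancel, map_one]; rfl
    simpa using this
  have hadj : ∀ (k : G) (a b : V), (inner ℂ (ρ k a) b : ℂ) = inner ℂ a (ρ k⁻¹ b) := by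
    intro k a b
    have := hρ_unit k⁻¹ (ρ k a) b
    rw [hinv k a] at this
    exact this.symm
  have hadj' : ∀ (k : G) (a b : V), (inner ℂ a (ρ k b) : ℂ) = inner ℂ (ρ k⁻¹ a) b := by
    intro k a b
    have := hρ_unit k⁻¹ a (ρ k b)
    rw [hinv k b] at this
    exact this.symm
  -- the integrand vector field
  set F : V → G → V := fun y h => (inner ℂ (ρ h w) y : ℂ) • ρ h v with hF
  have hFcont : ∀ y, Continuous (F y) := by
    intro y
    exact ((hρ_cont w).inner continuous_const).smul (hρ_cont v)
  have hFint : ∀ y, Integrable (F y) μ := fun y =>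
    (hFcont y).integrable_of_hasCompactSupport (HasCompactSupport.of_compactSpace _)
  -- the averaged operator T
  set T : V →ₗ[ℂ] V :=
    { toFun := fun y => ∫ h, F y h ∂μ
      map_add' := by
        intro a b
        have : ∀ h, F (a + b) h = F a h + F b h := by
          intro h; simp [hF, inner_add_right, add_smul]
        show (∫ h, F (a + b) h ∂μ) = (∫ h, F a h ∂μ) + ∫ h, F b h ∂μ
        rw [show (F (a+b)) = fun h => F a h + F b h from funext this,
          integral_add (hFint a) (hFint b)]
      map_smul' := by
        intro c a
        have : ∀ h, F (c • a) h = c • F a h := by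
          intro h; simp [hF, inner_smul_right, smul_smul]
        show (∫ h, F (c • a) h ∂μ) = c • ∫ h, F a h ∂μ
        rw [show (F (c • a)) = fun h => c • F a h from funext this, integral_smul] } with hT
  have hTapp : ∀ y, T y = ∫ h, F y h ∂μ := fun y => rfl
  -- T commutes with ρ
  have hcomm : ∀ (k : G) (y : V), T (ρ k y) = ρ k (T y) := by
    intro k y
    have h1 : ∀ h : G, F (ρ k y) h = (inner ℂ (ρ (k⁻¹ * h) w) y : ℂ) • ρ h v := by
      intro h
      show (inner ℂ (ρ h w) (ρ k y) : ℂ) • ρ h v = _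
      congr 1
      rw [hadj' k (ρ h w) y, ← Module.End.mul_apply, ← map_mul]
    have h2 : T (ρ k y) = ∫ h, (inner ℂ (ρ h w) y : ℂ) • ρ (k * h) v ∂μ := by
      rw [hTapp, show (F (ρ k y)) = fun h => (inner ℂ (ρ (k⁻¹ * h) w) y : ℂ) • ρ h v from
        funext h1]
      rw [← integral_mul_left_eq_self (fun h => (inner ℂ (ρ (k⁻¹ * h) w) y : ℂ) • ρ h v) k]
      simp [mul_assoc]
    -- pull ρ k out of the integral
    have hLk : Continuous (ρ k) := (ρ k).continuous_of_finiteDimensional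
    have h3 : ρ k (T y) = ∫ h, ρ k (F y h) ∂μ :=
      (ContinuousLinearMap.integral_comp_comm (LinearMap.toContinuousLinearMap (ρ k))
        (hFint y)).symm
    rw [h2, h3]
    congr 1
    funext h
    show (inner ℂ (ρ h w) y : ℂ) • ρ (k * h) v = ρ k ((inner ℂ (ρ h w) y : ℂ) • ρ h v)
    rw [map_mul, Module.End.mul_apply, _root_.map_smul]
  -- Schur's lemma: T is a scalar
  obtain ⟨c, hc⟩ := Module.End.exists_eigenvalue (T : Module.End ℂ V)
  have hU : ∀ (k : G) (y : V), y ∈ Module.End.eigenspace T c →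
      ρ k y ∈ Module.End.eigenspace T c := by
    intro k y hy
    rw [Module.End.mem_eigenspace_iff] at hy ⊢
    rw [hcomm, hy, _root_.map_smul]
  have hscalar : ∀ y, T y = c • y := by
    rcases hρ_irr _ hU with h | h
    · exact absurd h hc
    · intro y
      have : y ∈ Module.End.eigenspace T c := h ▸ Submodule.mem_top
      exact Module.End.mem_eigenspace_iff.mp this
  -- compute c via an orthonormal basis
  set n := Module.finrank ℂ V with hn
  have hnpos : 0 < n := Module.finrank_pos
  set b := stdOrthonormalBasis ℂ V with hb
  have hbi : ∀ i, (inner ℂ (b i) (b i) : ℂ) = 1 := by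
    intro i
    have := orthonormal_iff_ite.mp b.orthonormal i i
    simpa using this
  have hsum : ∑ i, (inner ℂ (b i) (T (b i)) : ℂ) = (inner ℂ w v : ℂ) := by
    have hterm : ∀ i, (inner ℂ (b i) (T (b i)) : ℂ)
        = ∫ h, (inner ℂ (ρ h w) (b i) : ℂ) * (inner ℂ (b i) (ρ h v) : ℂ) ∂μ := by
      intro i
      rw [hTapp, ← integral_inner (hFint (b i)) (b i)]
      congr 1; funext h
      simp [hF, inner_smul_right]
    calc ∑ i, (inner ℂ (b i) (T (b i)) : ℂ)
        = ∑ i, ∫ h, (inner ℂ (ρ h w) (b i) : ℂ) * (inner ℂ (b i) (ρ h v) : ℂ) ∂μ := by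
          simp_rw [hterm]
      _ = ∫ h, ∑ i, (inner ℂ (ρ h w) (b i) : ℂ) * (inner ℂ (b i) (ρ h v) : ℂ) ∂μ := by
          rw [← integral_finset_sum]
          intro i _
          apply Continuous.integrable_of_hasCompactSupport
          · exact ((hρ_cont w).inner continuous_const).mul
              (continuous_const.inner (hρ_cont v))
          · exact HasCompactSupport.of_compactSpace _
      _ = ∫ h, (inner ℂ w v : ℂ) ∂μ := by
          congr 1; funext h
          rw [b.sum_inner_mul_inner (ρ h w) (ρ h v), hρ_unit]
      _ = inner ℂ w v := by simp
  have hsum' : ∑ i, (inner ℂ (b i) (T (b i)) : ℂ) = (n : ℂ) * c := by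
    calc ∑ i, (inner ℂ (b i) (T (b i)) : ℂ) = ∑ i : Fin n, c := by
          refine Finset.sum_congr rfl fun i _ => ?_
          rw [hscalar, inner_smul_right, hbi, mul_one]
      _ = (n : ℂ) * c := by simp
  have hcval : c = (inner ℂ w v : ℂ) / (n : ℂ) := by
    have hne : (n : ℂ) ≠ 0 := Nat.cast_ne_zero.mpr hnpos.ne'
    field_simp
    rw [← hsum, hsum', mul_comm]
  -- final assembly
  have hint : ∀ h : G, (inner ℂ u (ρ (g * h) v) : ℂ) * (inner ℂ w (ρ h⁻¹ x) : ℂ)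
      = (inner ℂ u (ρ g (F x h)) : ℂ) := by
    intro h
    rw [← hadj h w x]
    show (inner ℂ u (ρ (g * h) v) : ℂ) * (inner ℂ (ρ h w) x : ℂ)
      = (inner ℂ u (ρ g ((inner ℂ (ρ h w) x : ℂ) • ρ h v)) : ℂ)
    rw [map_mul, Module.End.mul_apply, _root_.map_smul, inner_smul_right, mul_comm]
  rw [show (fun h => (inner ℂ u (ρ (g * h) v) : ℂ) * (inner ℂ w (ρ h⁻¹ x) : ℂ))
      = fun h => (inner ℂ u (ρ g (F x h)) : ℂ) from funext hint]
  have hρgF : Integrable (fun h => ρ g (F x h)) μ := by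
    apply Continuous.integrable_of_hasCompactSupport
    · exact ((ρ g).continuous_of_finiteDimensional).comp (hFcont x)
    · exact HasCompactSupport.of_compactSpace _
  rw [integral_inner hρgF u]
  have h5 : ∫ h, ρ g (F x h) ∂μ = ρ g (T x) := by
    rw [hTapp]
    exact ContinuousLinearMap.integral_comp_comm
      (LinearMap.toContinuousLinearMap (ρ g)) (hFint x)
  rw [h5, hscalar, _root_.map_smul, inner_smul_right, hcval]
  ring
end

section
/- Let G be a compact Hausdorff topological group equipped with its normalized Haar probability measure μ, and let (V, ρ) be an irreducible continuous unitary representation of G with character χ_ρ. Then χ_ρ ∗ χ_ρ = χ_ρ / dim V, i.e. for every g ∈ G, ∫_G χ_ρ(g h) · χ_ρ(h⁻¹) dμ(h) = χ_ρ(g) / dim V. -/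
open MeasureTheory
open scoped InnerProductSpace

/-- **Schur's lemma** (in the form we need): a linear endomorphism commuting with all
operators of an irreducible representation on a nontrivial finite-dimensional complex
space is the scalar `trace S / dim V`. -/
lemma schur_aux' {G : Type*} [Group G] {V : Type*} [NormedAddCommGroup V]
    [InnerProductSpace ℂ V] [FiniteDimensional ℂ V] [Nontrivial V]
    (ρ : G →* (V →ₗ[ℂ] V))
    (hρ_irr : ∀ U : Submodule ℂ V,
      (∀ (g : G) (v : V), v ∈ U → ρ g v ∈ U) → U = ⊥ ∨ U = ⊤)
    (S : V →ₗ[ℂ] V) (hS : ∀ k : G, (ρ k) ∘ₗ S = S ∘ₗ ρ k) (v : V) :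
    S v = (LinearMap.trace ℂ V S / (Module.finrank ℂ V : ℂ)) • v := by
  obtain ⟨c, hc⟩ := Module.End.exists_eigenvalue (S : Module.End ℂ V)
  have hinv : ∀ (k : G) (w : V), w ∈ Module.End.eigenspace S c →
      ρ k w ∈ Module.End.eigenspace S c := by
    intro k w hw
    rw [Module.End.mem_eigenspace_iff] at hw ⊢
    have := congrArg (fun f => f w) (hS k)
    simp only [LinearMap.comp_apply] at this
    rw [← this, hw, _root_.map_smul]
  rcases hρ_irr _ hinv with h | h
  · exact absurd h hc
  · have hall : ∀ w : V, S w = c • w := by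
      intro w
      have : w ∈ Module.End.eigenspace S c := h ▸ Submodule.mem_top
      exact Module.End.mem_eigenspace_iff.mp this
    have hSeq : S = c • (LinearMap.id : V →ₗ[ℂ] V) := by
      ext w; simp [hall w]
    have htr : LinearMap.trace ℂ V S = c * (Module.finrank ℂ V : ℂ) := by
      rw [hSeq, _root_.map_smul, LinearMap.trace_id, smul_eq_mul]
    have hn : (Module.finrank ℂ V : ℂ) ≠ 0 := by
      exact_mod_cast Module.finrank_pos.ne'
    rw [htr, mul_div_cancel_right₀ _ hn, hall v]

/-- **Characters are convolution idempotents (up to normalization).**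
For an irreducible continuous unitary representation `ρ` of a compact Hausdorff
group `G` with character `χ_ρ(g) = tr(ρ(g))`, one has
`(χ_ρ ∗ χ_ρ)(g) = ∫ χ_ρ(g h) χ_ρ(h⁻¹) dμ(h) = χ_ρ(g) / dim V` for every `g`. -/
theorem character_convolution_same {G : Type*} [Group G] [TopologicalSpace G]
    [IsTopologicalGroup G] [CompactSpace G] [T2Space G]
    [MeasurableSpace G] [BorelSpace G]
    (μ : Measure G) [μ.IsHaarMeasure] [IsProbabilityMeasure μ]
    {V : Type*} [NormedAddCommGroup V] [InnerProductSpace ℂ V]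
    [FiniteDimensional ℂ V] [Nontrivial V]
    (ρ : G →* (V →ₗ[ℂ] V))
    (hρ_unit : ∀ (g : G) (u v : V), (inner ℂ (ρ g u) (ρ g v) : ℂ) = inner ℂ u v)
    (hρ_cont : ∀ v : V, Continuous fun g : G => ρ g v)
    (hρ_irr : ∀ U : Submodule ℂ V,
      (∀ (g : G) (v : V), v ∈ U → ρ g v ∈ U) → U = ⊥ ∨ U = ⊤)
    (g : G) :
    ∫ h, LinearMap.trace ℂ V (ρ (g * h)) * LinearMap.trace ℂ V (ρ h⁻¹) ∂μ
      = LinearMap.trace ℂ V (ρ g) / (Module.finrank ℂ V : ℂ) := by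
  classical
  set ρ' : G → V →L[ℂ] V := fun k => LinearMap.toContinuousLinearMap (ρ k) with hρ'def
  have hρ'app : ∀ (k : G) (v : V), ρ' k v = ρ k v := fun _ _ => rfl
  have hρ'c : Continuous ρ' := continuous_clm_apply.mpr fun v => hρ_cont v
  have hρ'inv : Continuous fun h : G => ρ' h⁻¹ := hρ'c.comp continuous_inv
  have hρ'mul : ∀ k h : G, ρ' (k * h) = (ρ' k).comp (ρ' h) := by
    intro k h; ext v
    show ρ (k * h) v = ρ k (ρ h v)
    rw [map_mul]; rfl
  have hIntL : ∀ F : G → (V →L[ℂ] V), Continuous F → Integrable F μ := fun F hF =>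
    hF.integrable_of_hasCompactSupport (HasCompactSupport.of_compactSpace F)
  have hIntC : ∀ F : G → ℂ, Continuous F → Integrable F μ := fun F hF =>
    hF.integrable_of_hasCompactSupport (HasCompactSupport.of_compactSpace F)
  have hcontF : ∀ A : V →L[ℂ] V,
      Continuous fun h : G => (ρ' h).comp (A.comp (ρ' h⁻¹)) := fun A =>
    hρ'c.clm_comp (continuous_const.clm_comp hρ'inv)
  have hIntF : ∀ A : V →L[ℂ] V,
      Integrable (fun h : G => (ρ' h).comp (A.comp (ρ' h⁻¹))) μ := fun A =>
    hIntL _ (hcontF A)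
  -- the averaged operator commutes with the representation
  have hcomm : ∀ (A : V →L[ℂ] V) (k : G),
      (ρ' k).comp (∫ h, (ρ' h).comp (A.comp (ρ' h⁻¹)) ∂μ)
        = (∫ h, (ρ' h).comp (A.comp (ρ' h⁻¹)) ∂μ).comp (ρ' k) := by
    intro A k
    have h1 : (ρ' k).comp (∫ h, (ρ' h).comp (A.comp (ρ' h⁻¹)) ∂μ)
        = ∫ h, (ρ' k).comp ((ρ' h).comp (A.comp (ρ' h⁻¹))) ∂μ := by
      have := (ContinuousLinearMap.compL ℂ V V V (ρ' k)).integral_comp_comm (hIntF A)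
      simpa using this.symm
    have h2 : (∫ h, (ρ' h).comp (A.comp (ρ' h⁻¹)) ∂μ).comp (ρ' k)
        = ∫ h, ((ρ' h).comp (A.comp (ρ' h⁻¹))).comp (ρ' k) ∂μ := by
      have := ((ContinuousLinearMap.compL ℂ V V V).flip (ρ' k)).integral_comp_comm (hIntF A)
      simpa using this.symm
    rw [h1, h2]
    have h3 : ∀ h : G, (ρ' k).comp ((ρ' h).comp (A.comp (ρ' h⁻¹)))
        = (fun h : G => (ρ' h).comp (A.comp (ρ' (h⁻¹ * k)))) (k * h) := by
      intro h
      simp only [mul_inv_rev, ← ContinuousLinearMap.comp_assoc, ← hρ'mul]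
      congr 2
      group
    have h4 : ∀ h : G, ((ρ' h).comp (A.comp (ρ' h⁻¹))).comp (ρ' k)
        = (ρ' h).comp (A.comp (ρ' (h⁻¹ * k))) := by
      intro h
      simp only [hρ'mul, ContinuousLinearMap.comp_assoc]
    simp_rw [h3, h4]
    exact integral_mul_left_eq_self (fun h : G => (ρ' h).comp (A.comp (ρ' (h⁻¹ * k)))) k
  -- the trace of the averaged operator equals the trace of the original operator
  have htrT : ∀ A : V →L[ℂ] V,
      LinearMap.trace ℂ V ((∫ h, (ρ' h).comp (A.comp (ρ' h⁻¹)) ∂μ : V →L[ℂ] V) : V →ₗ[ℂ] V)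
        = LinearMap.trace ℂ V (A : V →ₗ[ℂ] V) := by
    intro A
    set trL : (V →L[ℂ] V) →L[ℂ] ℂ :=
      LinearMap.toContinuousLinearMap
        ((LinearMap.trace ℂ V).comp (ContinuousLinearMap.coeLM ℂ)) with htrLdef
    have htrL : ∀ X : V →L[ℂ] V, trL X = LinearMap.trace ℂ V (X : V →ₗ[ℂ] V) := fun _ => rfl
    rw [← htrL, ← trL.integral_comp_comm (hIntF A)]
    have hpt : ∀ h : G, trL ((ρ' h).comp (A.comp (ρ' h⁻¹)))
        = LinearMap.trace ℂ V (A : V →ₗ[ℂ] V) := by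
      intro h
      rw [htrL]
      have h1 : (((ρ' h).comp (A.comp (ρ' h⁻¹)) : V →L[ℂ] V) : V →ₗ[ℂ] V)
          = (ρ h) ∘ₗ ((A : V →ₗ[ℂ] V) ∘ₗ ρ h⁻¹) := rfl
      rw [h1, LinearMap.trace_comp_comm', LinearMap.comp_assoc]
      have h2 : (ρ h⁻¹) ∘ₗ (ρ h) = LinearMap.id := by
        have h3 : ρ h⁻¹ * ρ h = 1 := by rw [← map_mul, inv_mul_cancel, map_one]
        exact h3
      rw [h2, LinearMap.comp_id]
    simp_rw [hpt]
    simp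
  -- Schur: the averaged operator is the scalar `trace A / dim V`
  have key : ∀ (A : V →L[ℂ] V) (v : V),
      (∫ h, (ρ' h).comp (A.comp (ρ' h⁻¹)) ∂μ) v
        = (LinearMap.trace ℂ V (A : V →ₗ[ℂ] V) / (Module.finrank ℂ V : ℂ)) • v := by
    intro A v
    have hS : ∀ k : G,
        (ρ k) ∘ₗ ((∫ h, (ρ' h).comp (A.comp (ρ' h⁻¹)) ∂μ : V →L[ℂ] V) : V →ₗ[ℂ] V)
          = ((∫ h, (ρ' h).comp (A.comp (ρ' h⁻¹)) ∂μ : V →L[ℂ] V) : V →ₗ[ℂ] V) ∘ₗ ρ k := by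
      intro k
      have h := congrArg (fun X : V →L[ℂ] V => (X : V →ₗ[ℂ] V)) (hcomm A k)
      exact h
    have := schur_aux' ρ hρ_irr _ hS v
    rw [htrT A] at this
    exact this
  -- orthonormal basis and the trace formula
  set b := stdOrthonormalBasis ℂ V with hbdef
  have htr : ∀ f : V →ₗ[ℂ] V,
      LinearMap.trace ℂ V f = ∑ i, ⟪(b i : V), f (b i)⟫_ℂ := by
    intro f
    rw [LinearMap.trace_eq_matrix_trace ℂ b.toBasis, Matrix.trace]
    refine Finset.sum_congr rfl fun i _ => ?_
    rw [Matrix.diag_apply, LinearMap.toMatrix_apply, b.coe_toBasis,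
      b.coe_toBasis_repr_apply, b.repr_apply_apply]
  -- matrix units
  set A : Fin (Module.finrank ℂ V) → Fin (Module.finrank ℂ V) → (V →L[ℂ] V) :=
    fun i j => (innerSL ℂ ((b i : V))).smulRight (b j) with hAdef
  have hAapp : ∀ (i j) (v : V), A i j v = ⟪(b i : V), v⟫_ℂ • (b j : V) := by
    intro i j v; simp [hAdef]
  have horth : ∀ i j, ⟪(b i : V), (b j : V)⟫_ℂ = if i = j then 1 else 0 :=
    fun i j => orthonormal_iff_ite.mp b.orthonormal i j
  have htrA : ∀ i j, LinearMap.trace ℂ V ((A i j : V →L[ℂ] V) : V →ₗ[ℂ] V)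
      = if i = j then 1 else 0 := by
    intro i j
    rw [htr]
    have h1 : ∀ k, ⟪(b k : V), ((A i j : V →L[ℂ] V) : V →ₗ[ℂ] V) (b k)⟫_ℂ
        = (if i = k then (1:ℂ) else 0) * (if k = j then (1:ℂ) else 0) := by
      intro k
      rw [ContinuousLinearMap.coe_coe, hAapp, inner_smul_right, horth, horth, mul_comm]
    simp_rw [h1]
    simp
  -- value of each matrix-coefficient integral
  have hterm : ∀ i j : Fin (Module.finrank ℂ V),
      ∫ h, ⟪(b j : V), ρ (g*h) (b j)⟫_ℂ * ⟪(b i : V), ρ h⁻¹ (b i)⟫_ℂ ∂μ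
        = (if i = j then (1:ℂ) else 0) / (Module.finrank ℂ V : ℂ)
            * ⟪(b j : V), ρ g (b i)⟫_ℂ := by
    intro i j
    set φ : (V →L[ℂ] V) →L[ℂ] ℂ :=
      ((innerSL ℂ ((b j : V))).comp
        ((LinearMap.toContinuousLinearMap (ρ g)).comp
          (ContinuousLinearMap.apply ℂ V (b i)))) with hφdef
    have hφapp : ∀ X : V →L[ℂ] V, φ X = ⟪(b j : V), ρ g (X (b i))⟫_ℂ := fun X => rfl
    have hpt : ∀ h : G, ⟪(b j : V), ρ (g*h) (b j)⟫_ℂ * ⟪(b i : V), ρ h⁻¹ (b i)⟫_ℂ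
        = φ ((ρ' h).comp ((A i j).comp (ρ' h⁻¹))) := by
      intro h
      have hgh : ρ g (ρ h (b j)) = ρ (g*h) (b j) := by rw [map_mul]; rfl
      rw [hφapp]
      simp only [ContinuousLinearMap.comp_apply, hρ'app, hAapp, _root_.map_smul,
        inner_smul_right, hgh]
      ring
    calc ∫ h, ⟪(b j : V), ρ (g*h) (b j)⟫_ℂ * ⟪(b i : V), ρ h⁻¹ (b i)⟫_ℂ ∂μ
        = ∫ h, φ ((ρ' h).comp ((A i j).comp (ρ' h⁻¹))) ∂μ := by simp_rw [hpt]
      _ = φ (∫ h, (ρ' h).comp ((A i j).comp (ρ' h⁻¹)) ∂μ) :=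
          φ.integral_comp_comm (hIntF _)
      _ = ⟪(b j : V), ρ g ((LinearMap.trace ℂ V ((A i j : V →L[ℂ] V) : V →ₗ[ℂ] V)
            / (Module.finrank ℂ V : ℂ)) • (b i : V))⟫_ℂ := by rw [hφapp, key]
      _ = (if i = j then (1:ℂ) else 0) / (Module.finrank ℂ V : ℂ)
            * ⟪(b j : V), ρ g (b i)⟫_ℂ := by
          rw [htrA, _root_.map_smul, inner_smul_right]
  have hInt1 : ∀ i j : Fin (Module.finrank ℂ V),
      Integrable (fun h : G => ⟪(b j : V), ρ (g*h) (b j)⟫_ℂ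
        * ⟪(b i : V), ρ h⁻¹ (b i)⟫_ℂ) μ := by
    intro i j
    refine hIntC _ (Continuous.mul ?_ ?_)
    · exact Continuous.inner continuous_const ((hρ_cont (b j)).comp (continuous_mul_left g))
    · exact Continuous.inner continuous_const ((hρ_cont (b i)).comp continuous_inv)
  have hLHS : ∀ h : G, LinearMap.trace ℂ V (ρ (g * h)) * LinearMap.trace ℂ V (ρ h⁻¹)
      = ∑ j, ∑ i, ⟪(b j : V), ρ (g*h) (b j)⟫_ℂ * ⟪(b i : V), ρ h⁻¹ (b i)⟫_ℂ := by
    intro h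
    rw [htr (ρ (g*h)), htr (ρ h⁻¹), Finset.sum_mul_sum]
  calc ∫ h, LinearMap.trace ℂ V (ρ (g * h)) * LinearMap.trace ℂ V (ρ h⁻¹) ∂μ
      = ∫ h, ∑ j, ∑ i, ⟪(b j : V), ρ (g*h) (b j)⟫_ℂ * ⟪(b i : V), ρ h⁻¹ (b i)⟫_ℂ ∂μ := by
        simp_rw [hLHS]
    _ = ∑ j, ∑ i, ∫ h, ⟪(b j : V), ρ (g*h) (b j)⟫_ℂ * ⟪(b i : V), ρ h⁻¹ (b i)⟫_ℂ ∂μ := by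
        rw [integral_finset_sum _ (fun j _ => integrable_finset_sum _ (fun i _ => hInt1 i j))]
        exact Finset.sum_congr rfl fun j _ => integral_finset_sum _ fun i _ => hInt1 i j
    _ = ∑ j, ∑ i, (if i = j then (1:ℂ) else 0) / (Module.finrank ℂ V : ℂ)
          * ⟪(b j : V), ρ g (b i)⟫_ℂ := by simp_rw [hterm]
    _ = ∑ j, ⟪(b j : V), ρ g (b j)⟫_ℂ / (Module.finrank ℂ V : ℂ) := by
        refine Finset.sum_congr rfl fun j _ => ?_
        rw [Finset.sum_eq_single j]
        · simp [div_mul_eq_mul_div, mul_comm, div_eq_inv_mul]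
        · intro i _ hij; simp [hij]
        · intro h; exact absurd (Finset.mem_univ j) h
    _ = LinearMap.trace ℂ V (ρ g) / (Module.finrank ℂ V : ℂ) := by
        rw [htr, Finset.sum_div]
end
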